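/- In a linear–Gaussian model where T ⊥ N | M (equivalently Σ_NT = Σ_NM Σ_MM^{-1} Σ_MT), the global whitened CCA operator Ω_X = Σ_XX^{-1/2} Σ_XT Σ_TT^{-1} Σ_TX Σ_XX^{-1/2} and the Markov-blanket operator Ω_M = Σ_MM^{-1/2} Σ_MT Σ_TT^{-1} Σ_TM Σ_MM^{-1/2} have the same nonzero eigenvalues, and every eigenvector of Ω_M with nonzero eigenvalue lifts to an eigenvector of Ω_X with the same eigenvalue via v_X = Q v_M with Q = Σ_XX^{-1/2} L Σ_MM^{1/2}. -/

import Mathlib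

open Matrix Polynomial
noncomputable def Matrix.PosSemidef.sqrt {n : Type*} [Fintype n] [DecidableEq n]
    {A : Matrix n n ℝ} (hA : A.PosSemidef) : Matrix n n ℝ :=
  hA.1.eigenvectorUnitary * diagonal ((√·) ∘ hA.1.eigenvalues) *
    (star hA.1.eigenvectorUnitary : Matrix n n ℝ)

lemma Matrix.PosSemidef.posSemidef_sqrt {n : Type*} [Fintype n] [DecidableEq n]
    {A : Matrix n n ℝ} (hA : A.PosSemidef) : hA.sqrt.PosSemidef := by
  unfold Matrix.PosSemidef.sqrt
  have hd : (diagonal ((√·) ∘ hA.1.eigenvalues)).PosSemidef :=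
    posSemidef_diagonal_iff.mpr (fun i => Real.sqrt_nonneg _)
  exact hd.mul_mul_conjTranspose_same _

lemma Matrix.PosSemidef.sqrt_mul_self {n : Type*} [Fintype n] [DecidableEq n]
    {A : Matrix n n ℝ} (hA : A.PosSemidef) : hA.sqrt * hA.sqrt = A := by
  unfold Matrix.PosSemidef.sqrt
  have hU : (star hA.1.eigenvectorUnitary : Matrix n n ℝ) * hA.1.eigenvectorUnitary = 1 :=
    Unitary.coe_star_mul_self _
  have hD : diagonal ((√·) ∘ hA.1.eigenvalues) * diagonal ((√·) ∘ hA.1.eigenvalues) =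
      diagonal hA.1.eigenvalues := by
    rw [diagonal_mul_diagonal]
    congr 1
    funext i
    exact Real.mul_self_sqrt (hA.eigenvalues_nonneg i)
  calc _ = (hA.1.eigenvectorUnitary : Matrix n n ℝ) * (diagonal ((√·) ∘ hA.1.eigenvalues) *
        ((star hA.1.eigenvectorUnitary : Matrix n n ℝ) * hA.1.eigenvectorUnitary) *
        diagonal ((√·) ∘ hA.1.eigenvalues)) * (star hA.1.eigenvectorUnitary : Matrix n n ℝ) := by
          simp only [Matrix.mul_assoc]
    _ = A := by
      rw [hU, Matrix.mul_one, hD]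
      conv_rhs => rw [hA.1.spectral_theorem]
      simp

private lemma aux_charpoly_conj {ι : Type*} [Fintype ι] [DecidableEq ι]
    (U V A : Matrix ι ι ℝ) (h1 : U * V = 1) :
    (U * A * V).charpoly = A.charpoly := by
  have hm : charmatrix (U * A * V) =
      U.map (C : ℝ →+* ℝ[X]) * charmatrix A * V.map (C : ℝ →+* ℝ[X]) := by
    rw [charmatrix, charmatrix, RingHom.mapMatrix_apply, RingHom.mapMatrix_apply,
      Matrix.mul_sub, Matrix.sub_mul]
    congr 1
    · rw [← (Matrix.scalar_commute (X : ℝ[X]) (Commute.all X) (U.map C)).eq,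
        Matrix.mul_assoc, ← Matrix.map_mul, h1, Matrix.map_one C (map_zero C) (map_one C),
        Matrix.mul_one]
    · rw [Matrix.mul_assoc, ← Matrix.map_mul, ← Matrix.map_mul, Matrix.mul_assoc]
  have hUV : (U.map (C : ℝ →+* ℝ[X])).det * (V.map (C : ℝ →+* ℝ[X])).det = 1 := by
    rw [← det_mul, ← Matrix.map_mul, h1, Matrix.map_one C (map_zero C) (map_one C), det_one]
  unfold Matrix.charpoly
  rw [hm, det_mul, det_mul]
  calc (U.map (C : ℝ →+* ℝ[X])).det * (charmatrix A).det * (V.map (C : ℝ →+* ℝ[X])).det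
      = (charmatrix A).det *
        ((U.map (C : ℝ →+* ℝ[X])).det * (V.map (C : ℝ →+* ℝ[X])).det) := by ring
    _ = (charmatrix A).det := by rw [hUV, mul_one]

private lemma aux_charpoly_diagonal {ι : Type*} [Fintype ι] [DecidableEq ι] (d : ι → ℝ) :
    (Matrix.diagonal d).charpoly = ∏ i, (X - C (d i)) := by
  have hm : charmatrix (Matrix.diagonal d) = Matrix.diagonal (fun i => (X : ℝ[X]) - C (d i)) := by
    ext i j
    by_cases h : i = j
    · subst h; simp
    · simp [charmatrix_apply_ne _ _ _ h, Matrix.diagonal_apply_ne _ h]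
  rw [Matrix.charpoly, hm, det_diagonal]

private lemma aux_roots_charpoly {ι : Type*} [Fintype ι] [DecidableEq ι]
    (A : Matrix ι ι ℝ) (hA : A.IsHermitian) :
    A.charpoly.roots = Multiset.map hA.eigenvalues Finset.univ.val := by
  have h0 : A = (hA.eigenvectorUnitary : Matrix ι ι ℝ) * Matrix.diagonal hA.eigenvalues *
      (star (hA.eigenvectorUnitary : Matrix ι ι ℝ)) := by
    simpa using hA.spectral_theorem
  have h1 : A.charpoly = (Matrix.diagonal hA.eigenvalues).charpoly := by
    rw [congrArg Matrix.charpoly h0]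
    exact aux_charpoly_conj _ _ _ ((Matrix.mem_unitaryGroup_iff).mp hA.eigenvectorUnitary.2)
  rw [h1, aux_charpoly_diagonal]
  rw [Polynomial.roots_prod _ _ (Polynomial.monic_prod_of_monic _ _
      (fun i _ => Polynomial.monic_X_sub_C _)).ne_zero]
  simp [Polynomial.roots_X_sub_C, Multiset.bind_singleton]

private lemma aux_charpoly_frac {ι : Type*} [Fintype ι] [DecidableEq ι]
    (M : Matrix ι ι ℝ) :
    (algebraMap ℝ[X] (FractionRing ℝ[X])) M.charpoly =
      ((algebraMap ℝ[X] (FractionRing ℝ[X]) X) • (1 : Matrix ι ι (FractionRing ℝ[X])) -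
        M.map ((algebraMap ℝ[X] (FractionRing ℝ[X])).comp (C : ℝ →+* ℝ[X]))).det := by
  rw [Matrix.charpoly, RingHom.map_det]
  congr 1
  ext i j
  simp only [RingHom.mapMatrix_apply, Matrix.map_apply, charmatrix_apply, Matrix.sub_apply, Matrix.smul_apply,
    Matrix.one_apply, Matrix.diagonal_apply, map_sub,
    apply_ite (algebraMap ℝ[X] (FractionRing ℝ[X])), map_zero, smul_eq_mul, mul_ite, mul_one,
    mul_zero, RingHom.comp_apply]

private lemma aux_smul_one_sub {F : Type*} [Field F] {ι : Type*} [Fintype ι] [DecidableEq ι]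
    {x : F} (hx : x ≠ 0) (M : Matrix ι ι F) :
    x • (1 : Matrix ι ι F) - M = x • ((1 : Matrix ι ι F) - x⁻¹ • M) := by
  rw [smul_sub, smul_smul, mul_inv_cancel₀ hx, one_smul]

private lemma aux_det_one_sub {F : Type*} [CommRing F] {ι κ : Type*} [Fintype ι] [DecidableEq ι]
    [Fintype κ] [DecidableEq κ] (x : F) (A : Matrix ι κ F) (B : Matrix κ ι F) :
    ((1 : Matrix ι ι F) - x • (A * B)).det = ((1 : Matrix κ κ F) - x • (B * A)).det := by
  calc ((1 : Matrix ι ι F) - x • (A * B)).det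
      = ((1 : Matrix ι ι F) + (-(x • A)) * B).det := by
        rw [Matrix.neg_mul, Matrix.smul_mul, ← sub_eq_add_neg]
    _ = ((1 : Matrix κ κ F) + B * (-(x • A))).det := Matrix.det_one_add_mul_comm _ _
    _ = ((1 : Matrix κ κ F) - x • (B * A)).det := by
        rw [Matrix.mul_neg, Matrix.mul_smul, ← sub_eq_add_neg]

private lemma aux_charpoly_mul_comm {ι κ : Type*} [Fintype ι] [DecidableEq ι]
    [Fintype κ] [DecidableEq κ] (A : Matrix ι κ ℝ) (B : Matrix κ ι ℝ) :
    X ^ Fintype.card κ * (A * B).charpoly = X ^ Fintype.card ι * (B * A).charpoly := by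
  have hinj : Function.Injective (algebraMap ℝ[X] (FractionRing ℝ[X])) :=
    IsFractionRing.injective ℝ[X] (FractionRing ℝ[X])
  have hx : (algebraMap ℝ[X] (FractionRing ℝ[X])) X ≠ 0 := by
    intro h
    exact Polynomial.X_ne_zero (hinj (by rw [h, map_zero]))
  apply hinj
  rw [_root_.map_mul, _root_.map_mul, map_pow, map_pow, aux_charpoly_frac, aux_charpoly_frac,
    aux_smul_one_sub hx, aux_smul_one_sub hx, det_smul, det_smul, Matrix.map_mul, Matrix.map_mul,
    aux_det_one_sub]
  ring

/-- In a linear–Gaussian model where `T ⊥ N | M`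
(equivalently `Σ_NT = Σ_NM Σ_MM⁻¹ Σ_MT`), the global whitened CCA operator
`Ω_X = Σ_XX^{-1/2} Σ_XT Σ_TT⁻¹ Σ_TX Σ_XX^{-1/2}` (written below as `C_X C_Xᴴ` with
`C_X = Σ_XX^{-1/2} Σ_XT Σ_TT^{-1/2}`) and the Markov-blanket operator
`Ω_M = Σ_MM^{-1/2} Σ_MT Σ_TT⁻¹ Σ_TM Σ_MM^{-1/2}` have the same nonzero eigenvalues (with
multiplicity), and every eigenvector `v` of `Ω_M` with nonzero eigenvalue lifts to an eigenvector
of `Ω_X` with the same eigenvalue via `v_X = Q v` with `Q = Σ_XX^{-1/2} L Σ_MM^{1/2}`,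
`L = [I; Σ_NM Σ_MM⁻¹]`. -/
theorem stmt4 {m n k : ℕ}
    (SMM : Matrix (Fin m) (Fin m) ℝ) (SMN : Matrix (Fin m) (Fin n) ℝ)
    (SNM : Matrix (Fin n) (Fin m) ℝ) (SNN : Matrix (Fin n) (Fin n) ℝ)
    (SMT : Matrix (Fin m) (Fin k) ℝ) (SNT : Matrix (Fin n) (Fin k) ℝ)
    (STT : Matrix (Fin k) (Fin k) ℝ)
    (hXX : (Matrix.fromBlocks SMM SMN SNM SNN).PosDef)
    (hMM : SMM.PosDef) (hTT : STT.PosDef)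
    (hCI : SNT = SNM * SMM⁻¹ * SMT) :
    let CX := (hXX.posSemidef.sqrt)⁻¹ * Matrix.fromRows SMT SNT * (hTT.posSemidef.sqrt)⁻¹
    let CM := (hMM.posSemidef.sqrt)⁻¹ * SMT * (hTT.posSemidef.sqrt)⁻¹
    let Q := (hXX.posSemidef.sqrt)⁻¹ *
      Matrix.fromRows (1 : Matrix (Fin m) (Fin m) ℝ) (SNM * SMM⁻¹) * hMM.posSemidef.sqrt
    (Multiset.filter (fun x => x ≠ 0)
        (Multiset.map (Matrix.isHermitian_mul_conjTranspose_self CX).eigenvalues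
          Finset.univ.val)) =
      (Multiset.filter (fun x => x ≠ 0)
        (Multiset.map (Matrix.isHermitian_mul_conjTranspose_self CM).eigenvalues
          Finset.univ.val)) ∧
    ∀ μ : ℝ, μ ≠ 0 → ∀ v : Fin m → ℝ,
      (CM * CMᴴ) *ᵥ v = μ • v → (CX * CXᴴ) *ᵥ (Q *ᵥ v) = μ • (Q *ᵥ v) := by
  intro CX CM Q
  have hCXd : CX = (hXX.posSemidef.sqrt)⁻¹ * Matrix.fromRows SMT SNT *
      (hTT.posSemidef.sqrt)⁻¹ := rfl
  have hCMd : CM = (hMM.posSemidef.sqrt)⁻¹ * SMT * (hTT.posSemidef.sqrt)⁻¹ := rfl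
  have hQd : Q = (hXX.posSemidef.sqrt)⁻¹ *
      Matrix.fromRows (1 : Matrix (Fin m) (Fin m) ℝ) (SNM * SMM⁻¹) * hMM.posSemidef.sqrt := rfl
  -- basic invertibility facts
  have hdXX : IsUnit (Matrix.fromBlocks SMM SMN SNM SNN).det :=
    isUnit_iff_ne_zero.mpr hXX.det_pos.ne'
  have hdMM : IsUnit SMM.det := isUnit_iff_ne_zero.mpr hMM.det_pos.ne'
  have hRX2 : hXX.posSemidef.sqrt * hXX.posSemidef.sqrt = Matrix.fromBlocks SMM SMN SNM SNN :=
    hXX.posSemidef.sqrt_mul_self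
  have hRM2 : hMM.posSemidef.sqrt * hMM.posSemidef.sqrt = SMM := hMM.posSemidef.sqrt_mul_self
  have hdRX : IsUnit (hXX.posSemidef.sqrt).det := by
    have h := congrArg Matrix.det hRX2
    rw [det_mul] at h
    refine isUnit_iff_ne_zero.mpr (fun h0 => hXX.det_pos.ne' ?_)
    rw [← h, h0, zero_mul]
  have hdRM : IsUnit (hMM.posSemidef.sqrt).det := by
    have h := congrArg Matrix.det hRM2
    rw [det_mul] at h
    refine isUnit_iff_ne_zero.mpr (fun h0 => hMM.det_pos.ne' ?_)
    rw [← h, h0, zero_mul]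
  have hRXi : (hXX.posSemidef.sqrt)⁻¹ * hXX.posSemidef.sqrt = 1 := nonsing_inv_mul _ hdRX
  have hRMi : (hMM.posSemidef.sqrt)⁻¹ * hMM.posSemidef.sqrt = 1 := nonsing_inv_mul _ hdRM
  have hRXi' : hXX.posSemidef.sqrt * (hXX.posSemidef.sqrt)⁻¹ = 1 := mul_nonsing_inv _ hdRX
  have hRMi' : hMM.posSemidef.sqrt * (hMM.posSemidef.sqrt)⁻¹ = 1 := mul_nonsing_inv _ hdRM
  have hRXh : (hXX.posSemidef.sqrt)ᴴ = hXX.posSemidef.sqrt := hXX.posSemidef.posSemidef_sqrt.1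
  have hRMh : (hMM.posSemidef.sqrt)ᴴ = hMM.posSemidef.sqrt := hMM.posSemidef.posSemidef_sqrt.1
  have hRXih : ((hXX.posSemidef.sqrt)⁻¹)ᴴ = (hXX.posSemidef.sqrt)⁻¹ := by
    rw [conjTranspose_nonsing_inv, hRXh]
  -- the lifted matrix L
  have hLmul : Matrix.fromBlocks SMM SMN SNM SNN *
      Matrix.fromRows SMM⁻¹ (0 : Matrix (Fin n) (Fin m) ℝ) =
      Matrix.fromRows (1 : Matrix (Fin m) (Fin m) ℝ) (SNM * SMM⁻¹) := by
    rw [Matrix.fromBlocks_mul_fromRows, Matrix.mul_zero, Matrix.mul_zero, add_zero, add_zero,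
      mul_nonsing_inv _ hdMM]
  have hSL : (Matrix.fromBlocks SMM SMN SNM SNN)⁻¹ *
      Matrix.fromRows (1 : Matrix (Fin m) (Fin m) ℝ) (SNM * SMM⁻¹) =
      Matrix.fromRows SMM⁻¹ (0 : Matrix (Fin n) (Fin m) ℝ) := by
    rw [← hLmul, ← Matrix.mul_assoc, nonsing_inv_mul _ hdXX, Matrix.one_mul]
  have hLL : (Matrix.fromRows (1 : Matrix (Fin m) (Fin m) ℝ) (SNM * SMM⁻¹))ᴴ *
      Matrix.fromRows SMM⁻¹ (0 : Matrix (Fin n) (Fin m) ℝ) = SMM⁻¹ := by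
    rw [Matrix.conjTranspose_fromRows_eq_fromCols_conjTranspose,
      Matrix.fromCols_mul_fromRows]
    simp
  have hXXinv : (hXX.posSemidef.sqrt)⁻¹ * (hXX.posSemidef.sqrt)⁻¹ =
      (Matrix.fromBlocks SMM SMN SNM SNN)⁻¹ := by
    rw [← Matrix.mul_inv_rev, hRX2]
  have hMMinv : SMM⁻¹ = (hMM.posSemidef.sqrt)⁻¹ * (hMM.posSemidef.sqrt)⁻¹ := by
    rw [← Matrix.mul_inv_rev, hRM2]
  -- key orthogonality : Qᴴ * Q = 1
  have hQQ : Qᴴ * Q = 1 := by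
    rw [hQd, conjTranspose_mul, conjTranspose_mul, hRMh, hRXih]
    calc hMM.posSemidef.sqrt *
          ((Matrix.fromRows (1 : Matrix (Fin m) (Fin m) ℝ) (SNM * SMM⁻¹))ᴴ *
            (hXX.posSemidef.sqrt)⁻¹) *
          ((hXX.posSemidef.sqrt)⁻¹ *
            Matrix.fromRows (1 : Matrix (Fin m) (Fin m) ℝ) (SNM * SMM⁻¹) * hMM.posSemidef.sqrt)
        = hMM.posSemidef.sqrt *
            ((Matrix.fromRows (1 : Matrix (Fin m) (Fin m) ℝ) (SNM * SMM⁻¹))ᴴ *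
              (((hXX.posSemidef.sqrt)⁻¹ * (hXX.posSemidef.sqrt)⁻¹) *
                Matrix.fromRows (1 : Matrix (Fin m) (Fin m) ℝ) (SNM * SMM⁻¹)) *
              hMM.posSemidef.sqrt) := by
          simp only [Matrix.mul_assoc]
      _ = hMM.posSemidef.sqrt *
            (SMM⁻¹ * hMM.posSemidef.sqrt) := by
          rw [hXXinv, hSL, hLL]
      _ = (hMM.posSemidef.sqrt * (hMM.posSemidef.sqrt)⁻¹) *
            ((hMM.posSemidef.sqrt)⁻¹ * hMM.posSemidef.sqrt) := by
          rw [hMMinv]; simp only [Matrix.mul_assoc]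
      _ = 1 := by rw [hRMi', hRMi, one_mul]
  -- CX factors through Q
  have hLS : Matrix.fromRows (1 : Matrix (Fin m) (Fin m) ℝ) (SNM * SMM⁻¹) * SMT =
      Matrix.fromRows SMT SNT := by
    rw [Matrix.fromRows_mul, Matrix.one_mul, ← hCI]
  have hCXQ : CX = Q * CM := by
    rw [hCXd, hQd, hCMd]
    calc (hXX.posSemidef.sqrt)⁻¹ * Matrix.fromRows SMT SNT * (hTT.posSemidef.sqrt)⁻¹
        = (hXX.posSemidef.sqrt)⁻¹ *
            (Matrix.fromRows (1 : Matrix (Fin m) (Fin m) ℝ) (SNM * SMM⁻¹) * SMT *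
              (hTT.posSemidef.sqrt)⁻¹) := by
          rw [hLS]; simp only [Matrix.mul_assoc]
      _ = (hXX.posSemidef.sqrt)⁻¹ *
            (Matrix.fromRows (1 : Matrix (Fin m) (Fin m) ℝ) (SNM * SMM⁻¹) *
              ((hMM.posSemidef.sqrt * (hMM.posSemidef.sqrt)⁻¹) *
                (SMT * (hTT.posSemidef.sqrt)⁻¹))) := by
          rw [hRMi', Matrix.one_mul]; simp only [Matrix.mul_assoc]
      _ = (hXX.posSemidef.sqrt)⁻¹ *
            Matrix.fromRows (1 : Matrix (Fin m) (Fin m) ℝ) (SNM * SMM⁻¹) * hMM.posSemidef.sqrt *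
            ((hMM.posSemidef.sqrt)⁻¹ * SMT * (hTT.posSemidef.sqrt)⁻¹) := by
          simp only [Matrix.mul_assoc]
  have hOmega : CX * CXᴴ = Q * (CM * CMᴴ) * Qᴴ := by
    rw [hCXQ, conjTranspose_mul]
    simp only [Matrix.mul_assoc]
  have hkey2 : (CX * CXᴴ) * Q = Q * (CM * CMᴴ) := by
    rw [hOmega, Matrix.mul_assoc (Q * (CM * CMᴴ)) Qᴴ Q, hQQ, Matrix.mul_one]
  have hAB : Q * (CM * CMᴴ * Qᴴ) = CX * CXᴴ := by
    rw [hOmega]; simp only [Matrix.mul_assoc]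
  have hBA : (CM * CMᴴ * Qᴴ) * Q = CM * CMᴴ := by
    rw [Matrix.mul_assoc, hQQ, Matrix.mul_one]
  have hchar : (CX * CXᴴ).charpoly = X ^ n * (CM * CMᴴ).charpoly := by
    have h := aux_charpoly_mul_comm Q (CM * CMᴴ * Qᴴ)
    rw [hAB, hBA, Fintype.card_fin, Fintype.card_sum, Fintype.card_fin, Fintype.card_fin,
      pow_add] at h
    have hX : (X : ℝ[X]) ^ m ≠ 0 := pow_ne_zero _ Polynomial.X_ne_zero
    apply mul_left_cancel₀ hX
    rw [h, mul_assoc]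
  constructor
  · rw [← aux_roots_charpoly (CX * CXᴴ) (Matrix.isHermitian_mul_conjTranspose_self CX),
      ← aux_roots_charpoly (CM * CMᴴ) (Matrix.isHermitian_mul_conjTranspose_self CM),
      hchar, Polynomial.roots_mul (mul_ne_zero (pow_ne_zero _ Polynomial.X_ne_zero)
        (Matrix.charpoly_monic _).ne_zero),
      Polynomial.roots_pow, Polynomial.roots_X, Multiset.filter_add]
    have h0 : Multiset.filter (fun x => x ≠ 0) (n • ({0} : Multiset ℝ)) = 0 := by
      rw [Multiset.nsmul_singleton]
      rw [Multiset.filter_eq_nil]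
      intro a ha
      simp [Multiset.eq_of_mem_replicate ha]
    rw [h0, zero_add]
  · intro μ hμ v hv
    rw [Matrix.mulVec_mulVec, hkey2, ← Matrix.mulVec_mulVec, hv, Matrix.mulVec_smul]
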